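/- (Randomized weighted majority / multiplicative weights regret bound, in the scaled form stated in the paper.) Let η ≥ 2 be a number of experts, Z a type of events, ρ > 0, and M : Fin η → Z → ℝ a penalty function with 0 ≤ M a z ≤ ρ for all a and z. For every ε with 0 < ε ≤ 1/2 there exists an online randomized strategy σ : List Z → PMF (Fin η) (the distribution chosen before the k-th event depends only on the first k−1 events) such that for every T : ℕ and every event sequence z : Fin T → Z, the total expected penalty satisfies ∑_{k<T} E_{a ∼ σ [z_0, …, z_{k−1}]} [M a (z k)] ≤ (ρ · ln η) / ε + (1 + ε) · min_{a : Fin η} ∑_{k<T} M a (z k). -/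

import Mathlib

/-- Randomized weighted majority / multiplicative weights regret bound.
There is an online randomized strategy `σ` (the distribution on experts chosen
before the `k`-th event depends only on the first `k−1` events) whose total
expected penalty on any event sequence is at most
`ρ ln η / ε + (1+ε) ·` (the total penalty of the best single expert). -/
theorem weighted_majority_regret
    (η : ℕ) (hη : 2 ≤ η) (Z : Type) (ρ : ℝ) (hρ : 0 < ρ)
    (M : Fin η → Z → ℝ) (hM : ∀ a z, 0 ≤ M a z ∧ M a z ≤ ρ)
    (ε : ℝ) (hε : 0 < ε) (hε' : ε ≤ 1 / 2) :
    ∃ σ : List Z → PMF (Fin η),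
      ∀ (T : ℕ) (z : Fin T → Z),
        (∑ k : Fin T, ∑ a : Fin η,
            ((σ (List.ofFn fun j : Fin (k : ℕ) =>
                z ⟨(j : ℕ), lt_trans j.isLt k.isLt⟩)) a).toReal * M a (z k))
          ≤ ρ * Real.log η / ε +
            (1 + ε) * ⨅ a : Fin η, ∑ k : Fin T, M a (z k) := by
  classical
  have hβ0 : (0:ℝ) < 1 - ε := by linarith
  set β : ℝ := 1 - ε with hβdef
  have hηpos : (0:ℝ) < (η:ℝ) := by
    have : (2:ℝ) ≤ (η:ℝ) := by exact_mod_cast hη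
    linarith
  have hηne : Nonempty (Fin η) := ⟨⟨0, by omega⟩⟩
  have hlogη : 0 ≤ Real.log η := Real.log_nonneg (by exact_mod_cast (by omega : 1 ≤ η))
  -- Lemma A : β ^ t ≤ 1 - ε t for t ∈ [0,1]
  have lemA : ∀ t : ℝ, 0 ≤ t → t ≤ 1 → β ^ t ≤ 1 - ε * t := by
    intro t ht ht1
    have h := convexOn_exp.2 (Set.mem_univ (Real.log β)) (Set.mem_univ (0:ℝ)) ht
      (by linarith : (0:ℝ) ≤ 1 - t) (by ring)
    simp only [smul_eq_mul, mul_zero, add_zero, Real.exp_zero, Real.exp_log hβ0] at h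
    rw [Real.rpow_def_of_pos hβ0]
    have : Real.log β * t = t * Real.log β := by ring
    rw [this]
    nlinarith [h]
  -- Lemma C : -log β ≤ ε (1 + ε)
  have lemC : -Real.log β ≤ ε * (1 + ε) := by
    have hx : (0:ℝ) ≤ ε + ε ^ 2 := by positivity
    have hq := Real.quadratic_le_exp_of_nonneg hx
    have key : Real.exp (-(ε + ε ^ 2)) ≤ β := by
      rw [Real.exp_neg]
      rw [inv_le_iff_one_le_mul₀ (Real.exp_pos _)]
      nlinarith [Real.exp_pos (ε + ε ^ 2)]
    have := Real.log_le_log (Real.exp_pos _) key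
    rw [Real.log_exp] at this
    nlinarith
  -- weights and strategy
  let w : List Z → Fin η → ℝ := fun l a => β ^ (l.map fun zz => M a zz / ρ).sum
  have hwpos : ∀ l a, 0 < w l a := fun l a => Real.rpow_pos_of_pos hβ0 _
  let Wt : List Z → ℝ := fun l => ∑ a, w l a
  have hWtpos : ∀ l, 0 < Wt l := fun l =>
    Finset.sum_pos (fun a _ => hwpos l a) ⟨⟨0, by omega⟩, Finset.mem_univ _⟩
  let σ : List Z → PMF (Fin η) := fun l => PMF.ofFintype
    (fun a => ENNReal.ofReal (w l a / Wt l)) (by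
      rw [← ENNReal.ofReal_sum_of_nonneg (fun a _ => div_nonneg (hwpos l a).le (hWtpos l).le)]
      rw [← Finset.sum_div, div_self (hWtpos l).ne']
      exact ENNReal.ofReal_one)
  have hσ : ∀ l a, ((σ l) a).toReal = w l a / Wt l := by
    intro l a
    simp only [σ, PMF.ofFintype_apply]
    exact ENNReal.toReal_ofReal (div_nonneg (hwpos l a).le (hWtpos l).le)
  refine ⟨σ, ?_⟩
  intro T z
  rcases Nat.eq_zero_or_pos T with hT | hT
  · subst hT
    simp only [Finset.univ_eq_empty, Finset.sum_empty, ciInf_const]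
    have : 0 ≤ ρ * Real.log η / ε := by positivity
    linarith
  -- main case
  · let z' : ℕ → Z := fun k => if h : k < T then z ⟨k, h⟩ else z ⟨0, hT⟩
    let m : Fin η → ℕ → ℝ := fun a k => M a (z' k) / ρ
    have hm0 : ∀ a k, 0 ≤ m a k := fun a k => div_nonneg (hM a _).1 hρ.le
    have hm1 : ∀ a k, m a k ≤ 1 := fun a k => (div_le_one hρ).2 (hM a _).2
    let S : ℕ → Fin η → ℝ := fun k a => ∑ j ∈ Finset.range k, m a j
    have hS0 : ∀ k a, 0 ≤ S k a := fun k a =>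
      Finset.sum_nonneg fun j _ => hm0 a j
    let Wk : ℕ → ℝ := fun k => ∑ a, β ^ S k a
    have hWkpos : ∀ k, 0 < Wk k := fun k =>
      Finset.sum_pos (fun a _ => Real.rpow_pos_of_pos hβ0 _) ⟨⟨0, by omega⟩, Finset.mem_univ _⟩
    let c : ℕ → ℝ := fun k => ∑ a, (β ^ S k a / Wk k) * m a k
    -- link to the strategy's lists
    have hw_hist : ∀ (k : Fin T) (a : Fin η),
        w (List.ofFn fun j : Fin (k : ℕ) => z ⟨(j : ℕ), lt_trans j.isLt k.isLt⟩) a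
          = β ^ S (k : ℕ) a := by
      intro k a
      have hlist : (List.ofFn fun j : Fin (k : ℕ) => z ⟨(j : ℕ), lt_trans j.isLt k.isLt⟩)
          = List.ofFn (fun j : Fin (k : ℕ) => z' (j : ℕ)) := by
        congr 1
        funext j
        simp only [z', dif_pos (lt_trans j.isLt k.isLt)]
      rw [hlist]
      simp only [w]
      congr 1
      rw [List.map_ofFn, List.sum_ofFn]
      exact Fin.sum_univ_eq_sum_range (fun j => M a (z' j) / ρ) (k : ℕ)
    -- potential step
    have step : ∀ k, Wk (k + 1) ≤ Wk k * Real.exp (-(ε * c k)) := by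
      intro k
      have hterm : ∀ a : Fin η, β ^ S (k + 1) a ≤ β ^ S k a * (1 - ε * m a k) := by
        intro a
        have hS : S (k + 1) a = S k a + m a k := Finset.sum_range_succ _ _
        rw [hS, Real.rpow_add hβ0]
        exact mul_le_mul_of_nonneg_left (lemA _ (hm0 a k) (hm1 a k))
          (Real.rpow_pos_of_pos hβ0 _).le
      have h1 : Wk (k + 1) ≤ Wk k - ε * ∑ a, β ^ S k a * m a k := by
        calc Wk (k + 1) ≤ ∑ a, β ^ S k a * (1 - ε * m a k) :=
              Finset.sum_le_sum fun a _ => hterm a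
          _ = Wk k - ε * ∑ a, β ^ S k a * m a k := by
              rw [Finset.mul_sum, ← Finset.sum_sub_distrib]
              apply Finset.sum_congr rfl
              intro a _
              ring
      have h2 : ∑ a, β ^ S k a * m a k = Wk k * c k := by
        simp only [c]
        rw [Finset.mul_sum]
        apply Finset.sum_congr rfl
        intro a _
        field_simp [(hWkpos k).ne']
      have h3 : 1 - ε * c k ≤ Real.exp (-(ε * c k)) := by
        have := Real.add_one_le_exp (-(ε * c k))
        linarith
      calc Wk (k + 1) ≤ Wk k - ε * (Wk k * c k) := by rw [← h2]; exact h1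
        _ = Wk k * (1 - ε * c k) := by ring
        _ ≤ Wk k * Real.exp (-(ε * c k)) :=
            mul_le_mul_of_nonneg_left h3 (hWkpos k).le
    -- iterated potential bound
    have pot : ∀ n, Wk n ≤ Wk 0 * Real.exp (-(ε * ∑ k ∈ Finset.range n, c k)) := by
      intro n
      induction n with
      | zero => simp
      | succ n ih =>
        calc Wk (n + 1) ≤ Wk n * Real.exp (-(ε * c n)) := step n
          _ ≤ (Wk 0 * Real.exp (-(ε * ∑ k ∈ Finset.range n, c k))) * Real.exp (-(ε * c n)) :=
              mul_le_mul_of_nonneg_right ih (Real.exp_pos _).le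
          _ = Wk 0 * Real.exp (-(ε * ∑ k ∈ Finset.range (n + 1), c k)) := by
              rw [mul_assoc, ← Real.exp_add, Finset.sum_range_succ]
              ring_nf
    have hW0 : Wk 0 = (η : ℝ) := by
      simp only [Wk, S, Finset.range_zero, Finset.sum_empty, Real.rpow_zero]
      simp
    -- lower bound and key per-expert inequality
    have main : ∀ a : Fin η,
        ∑ k ∈ Finset.range T, c k ≤ Real.log η / ε + (1 + ε) * S T a := by
      intro a
      have lower : β ^ S T a ≤ Wk T :=
        Finset.single_le_sum (fun b _ => (Real.rpow_pos_of_pos hβ0 _).le) (Finset.mem_univ a)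
      have h := lower.trans ((pot T).trans_eq (by rw [hW0]))
      have hlog := Real.log_le_log (Real.rpow_pos_of_pos hβ0 _) h
      rw [Real.log_rpow hβ0, Real.log_mul hηpos.ne' (Real.exp_ne_zero _), Real.log_exp] at hlog
      -- hlog : S T a * log β ≤ log η + -(ε * C)
      have hεC : ε * ∑ k ∈ Finset.range T, c k ≤ Real.log η + S T a * (ε * (1 + ε)) := by
        nlinarith [hS0 T a, lemC, hlog]
      calc ∑ k ∈ Finset.range T, c k
          = (ε * ∑ k ∈ Finset.range T, c k) / ε := (mul_div_cancel_left₀ _ hε.ne').symm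
        _ ≤ (Real.log η + S T a * (ε * (1 + ε))) / ε := by gcongr
        _ = Real.log η / ε + (1 + ε) * S T a := by field_simp [hε.ne']
    -- the LHS equals ρ * ∑ c
    have LHS_eq : (∑ k : Fin T, ∑ a : Fin η,
        ((σ (List.ofFn fun j : Fin (k : ℕ) =>
            z ⟨(j : ℕ), lt_trans j.isLt k.isLt⟩)) a).toReal * M a (z k))
        = ρ * ∑ k ∈ Finset.range T, c k := by
      rw [Finset.mul_sum, ← Fin.sum_univ_eq_sum_range (fun k => ρ * c k) T]
      apply Finset.sum_congr rfl
      intro k _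
      simp only [c, Finset.mul_sum]
      apply Finset.sum_congr rfl
      intro a _
      rw [hσ, hw_hist k a]
      have hWt : Wt (List.ofFn fun j : Fin (k : ℕ) => z ⟨(j : ℕ), lt_trans j.isLt k.isLt⟩)
          = Wk (k : ℕ) := by
        simp only [Wt, Wk]
        exact Finset.sum_congr rfl fun b _ => hw_hist k b
      rw [hWt]
      have hz' : z' (k : ℕ) = z k := by
        simp only [z', dif_pos k.isLt]
      simp only [m, hz']
      rw [mul_comm ρ, mul_assoc, div_mul_cancel₀ _ hρ.ne']
    -- relate S T a to total penalties
    have hSL : ∀ a : Fin η, ρ * S T a = ∑ k : Fin T, M a (z k) := by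
      intro a
      simp only [S, Finset.mul_sum]
      rw [← Fin.sum_univ_eq_sum_range (fun j => ρ * m a j) T]
      apply Finset.sum_congr rfl
      intro k _
      have hz' : z' (k : ℕ) = z k := by simp only [z', dif_pos k.isLt]
      simp only [m, hz']
      rw [mul_div_cancel₀ _ hρ.ne']
    -- the minimizing expert
    obtain ⟨a₀, ha₀⟩ := Finite.exists_min (fun a : Fin η => ∑ k : Fin T, M a (z k))
    have hinf : (⨅ a : Fin η, ∑ k : Fin T, M a (z k)) = ∑ k : Fin T, M a₀ (z k) :=
      le_antisymm (ciInf_le (Finite.bddBelow_range _) a₀) (le_ciInf ha₀)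
    rw [LHS_eq, hinf, ← hSL a₀]
    have := mul_le_mul_of_nonneg_left (main a₀) hρ.le
    calc ρ * ∑ k ∈ Finset.range T, c k
        ≤ ρ * (Real.log η / ε + (1 + ε) * S T a₀) := this
      _ = ρ * Real.log η / ε + (1 + ε) * (ρ * S T a₀) := by ring
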